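/- Let ℓ₁, ℓ₂ ≥ 1 and let p be a probability distribution on [ℓ₁] × [ℓ₂], with marginals p_X(i) := ∑_{j} p(i,j) and p_Y(j) := ∑_{i} p(i,j). Then ∑_{i=1}^{ℓ₁} ∑_{j=1}^{ℓ₂} ( p(i,j) · ∑_{i'≠i} ∑_{j'≠j} p(i',j') − ( ∑_{i'≠i} p(i',j) ) · ( ∑_{j'≠j} p(i,j') ) )² = ∑_{i=1}^{ℓ₁} ∑_{j=1}^{ℓ₂} ( p(i,j) − p_X(i)·p_Y(j) )². (That is, the degree-4 polynomial Q from the L2-distance estimator satisfies Q(p) = ‖p − p_X ⊗ p_Y‖₂².) -/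

import Mathlib

open Finset

theorem stmt18 (l1 l2 : ℕ) (h1 : 1 ≤ l1) (h2 : 1 ≤ l2)
    (p : Fin l1 × Fin l2 → ℝ) (hp0 : ∀ ω, 0 ≤ p ω) (hp1 : ∑ ω, p ω = 1) :
    ∑ i, ∑ j,
      (p (i, j) * (∑ i' ∈ Finset.univ.erase i, ∑ j' ∈ Finset.univ.erase j, p (i', j'))
        - (∑ i' ∈ Finset.univ.erase i, p (i', j)) *
          (∑ j' ∈ Finset.univ.erase j, p (i, j'))) ^ 2
    = ∑ i, ∑ j, (p (i, j) - (∑ j', p (i, j')) * (∑ i', p (i', j))) ^ 2 := by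
  apply Finset.sum_congr rfl
  intro i _
  apply Finset.sum_congr rfl
  intro j _
  have hsum : ∑ i', ∑ j', p (i', j') = 1 := by
    rw [← hp1, Fintype.sum_prod_type]
  have hi : ∀ f : Fin l1 → ℝ, ∑ i', f i' = f i + ∑ i' ∈ univ.erase i, f i' :=
    fun f => (Finset.add_sum_erase univ f (mem_univ i)).symm
  have hj : ∀ f : Fin l2 → ℝ, ∑ j', f j' = f j + ∑ j' ∈ univ.erase j, f j' :=
    fun f => (Finset.add_sum_erase univ f (mem_univ j)).symm
  have key : p (i, j) + (∑ j' ∈ univ.erase j, p (i, j'))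
      + (∑ i' ∈ univ.erase i, p (i', j))
      + (∑ i' ∈ univ.erase i, ∑ j' ∈ univ.erase j, p (i', j')) = 1 := by
    rw [← hsum, hi (fun i' => ∑ j', p (i', j')), hj (fun j' => p (i, j'))]
    rw [Finset.sum_congr rfl (fun i' _ => hj (fun j' => p (i', j')))]
    rw [Finset.sum_add_distrib]
    ring
  rw [hj (fun j' => p (i, j')), hi (fun i' => p (i', j))]
  set A := p (i, j)
  set B := ∑ i' ∈ univ.erase i, p (i', j)
  set C := ∑ j' ∈ univ.erase j, p (i, j')
  set D := ∑ i' ∈ univ.erase i, ∑ j' ∈ univ.erase j, p (i', j')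
  have h : A * D - B * C = A - (A + C) * (A + B) := by linear_combination A * key
  rw [h]
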